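/- In a graph G=(V,E) with |V|=n, |E|=m, construct the HRLQ instance G' with one resident r_i per vertex v_i (list: h_i, x), one resident r'_j per edge e_j (list: the two hospitals of its endpoints in some order), hospitals h_i with quotas [0, |E_i|+1] (list: r_i followed by the edge-residents of edges E_i incident on v_i), and hospital x with quotas [k,k] (list: all vertex-residents). Then G has an independent set of size k if and only if G' admits a feasible envy-free matching of size m+n. -/
import Mathlib


/-- An HRLQ instance: bipartite graph on residents `R` and hospitals `H` with
strict preferences encoded as rank functions (lower rank = more preferred)
and lower/upper quotas per hospital. -/
structure HRLQ (R H : Type) where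
  E : R → H → Prop
  rPref : R → H → ℕ
  hPref : H → R → ℕ
  lq : H → ℕ
  uq : H → ℕ

namespace HRLQ

variable {R H : Type}

/-- residents matched to hospital `h` -/
def matchedTo (M : R → Option H) (h : H) : Set R := {r | M r = some h}

/-- size of a matching -/
noncomputable def msize (M : R → Option H) : ℕ := {r | M r ≠ none}.ncard

variable (I : HRLQ R H)

/-- resident `r` strictly prefers hospital `h` to assignment `o`
    (being unmatched is least preferred); `h` must be acceptable to `r`. -/
def PrefersH (r : R) (h : H) (o : Option H) : Prop :=
  I.E r h ∧ ∀ h', o = some h' → I.rPref r h < I.rPref r h'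

def IsMatching (M : R → Option H) : Prop :=
  (∀ r h, M r = some h → I.E r h) ∧ ∀ h, (matchedTo M h).ncard ≤ I.uq h

def Feasible (M : R → Option H) : Prop :=
  ∀ h, I.lq h ≤ (matchedTo M h).ncard

def Blocks (M : R → Option H) (r : R) (h : H) : Prop :=
  I.E r h ∧ M r ≠ some h ∧ I.PrefersH r h (M r) ∧
    ((matchedTo M h).ncard < I.uq h ∨ ∃ r' ∈ matchedTo M h, I.hPref h r < I.hPref h r')

def Stable (M : R → Option H) : Prop := ∀ r h, ¬ I.Blocks M r h

def Envies (M : R → Option H) (r r' : R) : Prop :=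
  ∃ h, M r' = some h ∧ I.PrefersH r h (M r) ∧ I.hPref h r < I.hPref h r'

def EnvyFree (M : R → Option H) : Prop := ∀ r r', ¬ I.Envies M r r'

def RelaxedStable (M : R → Option H) : Prop :=
  (∀ h, {r | r ∈ matchedTo M h ∧ ∃ h', I.Blocks M r h'}.ncard ≤ I.lq h) ∧
  ∀ r, M r = none → ∀ h, ¬ I.Blocks M r h

/-- preferences are strict -/
def StrictPrefs : Prop :=
  (∀ r, Function.Injective (I.rPref r)) ∧ ∀ h, Function.Injective (I.hPref h)

end HRLQ

lemma card_incident_aux {V : Type} [Fintype V] [DecidableEq V] (G : SimpleGraph V)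
    [DecidableRel G.Adj] (v : V) :
    {e : {e : Sym2 V // e ∈ G.edgeSet} | v ∈ e.1}.ncard = G.degree v := by
  classical
  have h1 : Subtype.val '' {e : {e : Sym2 V // e ∈ G.edgeSet} | v ∈ e.1} = G.incidenceSet v := by
    ext x
    simp [SimpleGraph.incidenceSet, and_comm]
  calc {e : {e : Sym2 V // e ∈ G.edgeSet} | v ∈ e.1}.ncard
      = (Subtype.val '' {e : {e : Sym2 V // e ∈ G.edgeSet} | v ∈ e.1}).ncard :=
        (Set.ncard_image_of_injective _ Subtype.val_injective).symm
    _ = (G.incidenceSet v).ncard := by rw [h1]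
    _ = G.degree v := by
        rw [Set.ncard_eq_toFinset_card']
        rw [show (G.incidenceSet v).toFinset = G.incidenceFinset v by
          ext x; simp [SimpleGraph.mem_incidenceFinset]]
        exact G.card_incidenceFinset_eq_degree v

/-- Reduction from Independent Set to MAXEFM: G has an independent set of size k
iff the reduced HRLQ instance (vertex-residents with list hᵢ, x; edge-residents
with the two endpoint hospitals; hospitals hᵢ with quotas [0,|Eᵢ|+1] and list
rᵢ followed by the incident edge-residents; hospital x with quotas [k,k] and all
vertex-residents) admits a feasible envy-free matching of size m + n. -/
theorem ind_set_iff_envy_free_of_size_m_plus_n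
    {V : Type} [Fintype V] [DecidableEq V]
    (G : SimpleGraph V) [DecidableRel G.Adj] (k : ℕ)
    (I : HRLQ (V ⊕ {e : Sym2 V // e ∈ G.edgeSet}) (V ⊕ Unit))
    (hstrict : I.StrictPrefs)
    -- the acceptability (edge) structure of the reduced instance
    (hE1 : ∀ v u, I.E (Sum.inl v) (Sum.inl u) ↔ v = u)
    (hE2 : ∀ v, I.E (Sum.inl v) (Sum.inr ()))
    (hE3 : ∀ (e : {e : Sym2 V // e ∈ G.edgeSet}) u,
      I.E (Sum.inr e) (Sum.inl u) ↔ u ∈ e.1)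
    (hE4 : ∀ (e : {e : Sym2 V // e ∈ G.edgeSet}), ¬ I.E (Sum.inr e) (Sum.inr ()))
    -- vertex-resident rᵢ prefers hᵢ to x
    (hr : ∀ v, I.rPref (Sum.inl v) (Sum.inl v) < I.rPref (Sum.inl v) (Sum.inr ()))
    -- hospital hᵢ prefers rᵢ to every incident edge-resident
    (hh : ∀ v (e : {e : Sym2 V // e ∈ G.edgeSet}), v ∈ e.1 →
      I.hPref (Sum.inl v) (Sum.inl v) < I.hPref (Sum.inl v) (Sum.inr e))
    -- quotas
    (hlq : ∀ v, I.lq (Sum.inl v) = 0)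
    (huq : ∀ v, I.uq (Sum.inl v) = G.degree v + 1)
    (hxl : I.lq (Sum.inr ()) = k) (hxu : I.uq (Sum.inr ()) = k) :
    (∃ S : Finset V, S.card = k ∧ ∀ u ∈ S, ∀ w ∈ S, ¬ G.Adj u w) ↔
    (∃ M, I.IsMatching M ∧ I.Feasible M ∧ I.EnvyFree M ∧
      HRLQ.msize M = G.edgeFinset.card + Fintype.card V) := by
  classical
  -- abbreviations
  have hcardT : Fintype.card {e : Sym2 V // e ∈ G.edgeSet} = G.edgeFinset.card := by
    rw [SimpleGraph.edgeFinset, Set.toFinset_card]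
  constructor
  · -- forward direction
    rintro ⟨S, hScard, hSind⟩
    have key : ∀ e : {e : Sym2 V // e ∈ G.edgeSet}, ∃ u : V, u ∈ e.1 ∧ u ∉ S ∧
        ∀ w, w ∈ e.1 → w ∉ S →
          I.rPref (Sum.inr e) (Sum.inl u) ≤ I.rPref (Sum.inr e) (Sum.inl w) := by
      rintro ⟨e, he⟩
      induction e using Sym2.ind with
      | _ a b =>
        have hadj : G.Adj a b := G.mem_edgeSet.mp he
        by_cases ha : a ∈ S
        · have hb : b ∉ S := fun hb => hSind a ha b hb hadj
          refine ⟨b, by simp, hb, ?_⟩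
          intro w hw hwS
          rcases Sym2.mem_iff.1 hw with rfl | rfl
          · exact absurd ha hwS
          · exact le_refl _
        · by_cases hb : b ∈ S
          · refine ⟨a, by simp, ha, ?_⟩
            intro w hw hwS
            rcases Sym2.mem_iff.1 hw with rfl | rfl
            · exact le_refl _
            · exact absurd hb hwS
          · rcases le_total (I.rPref (Sum.inr ⟨s(a,b), he⟩) (Sum.inl a))
                (I.rPref (Sum.inr ⟨s(a,b), he⟩) (Sum.inl b)) with hle | hle
            · refine ⟨a, by simp, ha, ?_⟩
              intro w hw hwS
              rcases Sym2.mem_iff.1 hw with rfl | rfl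
              · exact le_refl _
              · exact hle
            · refine ⟨b, by simp, hb, ?_⟩
              intro w hw hwS
              rcases Sym2.mem_iff.1 hw with rfl | rfl
              · exact hle
              · exact le_refl _
    choose f hfmem hfnot hfmin using key
    set M : (V ⊕ {e : Sym2 V // e ∈ G.edgeSet}) → Option (V ⊕ Unit) :=
      Sum.elim (fun v => if v ∈ S then some (Sum.inr ()) else some (Sum.inl v))
        (fun e => some (Sum.inl (f e))) with hM
    -- nobody is matched to h_u for u ∈ S
    have hempty : ∀ u ∈ S, ∀ r' : V ⊕ {e : Sym2 V // e ∈ G.edgeSet}, M r' ≠ some (Sum.inl u) := by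
      intro u hu r'
      cases r' with
      | inl w =>
        simp only [hM, Sum.elim_inl]
        by_cases hw : w ∈ S
        · simp [hw]
        · simp only [hw, if_neg, if_false]
          intro hcontra
          obtain rfl : w = u := by simpa using hcontra
          exact hw hu
      | inr e =>
        simp only [hM, Sum.elim_inr]
        intro hcontra
        have hfe : f e = u := by simpa using hcontra
        exact hfnot e (hfe ▸ hu)
    -- matchedTo computations
    have hmx : HRLQ.matchedTo M (Sum.inr ()) = Sum.inl '' ↑S := by
      ext r
      cases r with
      | inl v =>
        by_cases hv : v ∈ S <;>
          simp [HRLQ.matchedTo, hM, hv]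
      | inr e =>
        simp [HRLQ.matchedTo, hM]
    have hmxcard : (HRLQ.matchedTo M (Sum.inr ())).ncard = k := by
      rw [hmx, Set.ncard_image_of_injective _ Sum.inl_injective,
        Set.ncard_coe_finset, hScard]
    have hmv : ∀ v : V, HRLQ.matchedTo M (Sum.inl v) ⊆
        insert (Sum.inl v) (Sum.inr '' {e : {e : Sym2 V // e ∈ G.edgeSet} | v ∈ e.1}) := by
      intro v r hr
      cases r with
      | inl w =>
        simp only [HRLQ.matchedTo, hM, Set.mem_setOf_eq, Sum.elim_inl] at hr
        by_cases hw : w ∈ S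
        · simp [hw] at hr
        · simp only [hw, if_neg, if_false, Option.some_inj, Sum.inl.injEq] at hr
          subst hr
          exact Set.mem_insert _ _
      | inr e =>
        simp only [HRLQ.matchedTo, hM, Set.mem_setOf_eq, Sum.elim_inr,
          Option.some_inj, Sum.inl.injEq] at hr
        refine Set.mem_insert_of_mem _ ⟨e, ?_, rfl⟩
        exact hr ▸ hfmem e
    have hmvcard : ∀ v : V, (HRLQ.matchedTo M (Sum.inl v)).ncard ≤ G.degree v + 1 := by
      intro v
      have h1 : (HRLQ.matchedTo M (Sum.inl v)).ncard ≤
          (insert (Sum.inl v) (Sum.inr '' {e : {e : Sym2 V // e ∈ G.edgeSet} | v ∈ e.1})).ncard :=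
        Set.ncard_le_ncard (hmv v) (Set.toFinite _)
      have h2 : (insert (Sum.inl (α := V) (β := {e : Sym2 V // e ∈ G.edgeSet}) v)
          (Sum.inr '' {e : {e : Sym2 V // e ∈ G.edgeSet} | v ∈ e.1})).ncard ≤
          (Sum.inr '' {e : {e : Sym2 V // e ∈ G.edgeSet} | v ∈ e.1} : Set (V ⊕ {e : Sym2 V // e ∈ G.edgeSet})).ncard + 1 :=
        Set.ncard_insert_le _ _
      have h3 : (Sum.inr '' {e : {e : Sym2 V // e ∈ G.edgeSet} | v ∈ e.1} : Set (V ⊕ {e : Sym2 V // e ∈ G.edgeSet})).ncard = G.degree v := by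
        rw [Set.ncard_image_of_injective _ Sum.inr_injective]
        exact card_incident_aux G v
      omega
    refine ⟨M, ⟨?_, ?_⟩, ?_, ?_, ?_⟩
    · -- matched pairs are acceptable
      intro r h hr
      cases r with
      | inl v =>
        simp only [hM, Sum.elim_inl] at hr
        by_cases hv : v ∈ S
        · simp only [hv, if_pos, Option.some_inj] at hr
          exact hr ▸ hE2 v
        · simp only [hv, if_neg, if_false, Option.some_inj] at hr
          exact hr ▸ (hE1 v v).2 rfl
      | inr e =>
        simp only [hM, Sum.elim_inr, Option.some_inj] at hr
        exact hr ▸ (hE3 e (f e)).2 (hfmem e)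
    · -- upper quotas
      intro h
      cases h with
      | inl v => rw [huq]; exact hmvcard v
      | inr u => cases u; rw [hxu, hmxcard]
    · -- feasible
      intro h
      cases h with
      | inl v => rw [hlq]; exact Nat.zero_le _
      | inr u => cases u; rw [hxl, hmxcard]
    · -- envy-free
      rintro r r' ⟨h, hMr', ⟨hacc, hpr⟩, hhp⟩
      cases r with
      | inl v =>
        cases h with
        | inl u =>
          have huv : v = u := (hE1 v u).1 hacc
          subst huv
          by_cases hv : v ∈ S
          · exact hempty v hv r' hMr'
          · have := hpr (Sum.inl v) (by simp [hM, hv])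
            exact lt_irrefl _ this
        | inr u =>
          cases u
          by_cases hv : v ∈ S
          · have := hpr (Sum.inr ()) (by simp [hM, hv])
            exact lt_irrefl _ this
          · have := hpr (Sum.inl v) (by simp [hM, hv])
            exact absurd (hr v) (not_lt.2 this.le)
      | inr e =>
        cases h with
        | inl u =>
          have hue : u ∈ e.1 := (hE3 e u).1 hacc
          by_cases hu : u ∈ S
          · exact hempty u hu r' hMr'
          · have hlt := hpr (Sum.inl (f e)) (by simp [hM])
            exact absurd (hfmin e u hue hu) (not_le.2 hlt)
        | inr u =>
          cases u
          exact hE4 e hacc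
    · -- size
      have huniv : {r : V ⊕ {e : Sym2 V // e ∈ G.edgeSet} | M r ≠ none} = Set.univ := by
        ext r
        cases r with
        | inl v =>
          by_cases hv : v ∈ S <;> simp [hM, hv]
        | inr e => simp [hM]
      rw [HRLQ.msize, huniv, Set.ncard_univ, Nat.card_eq_fintype_card,
        Fintype.card_sum, hcardT]
      omega
  · -- backward direction
    rintro ⟨M, ⟨hME, hMq⟩, hMf, hMef, hMs⟩
    -- everyone is matched
    have hall : ∀ r : V ⊕ {e : Sym2 V // e ∈ G.edgeSet}, ∃ h, M r = some h := by
      have huniv : {r : V ⊕ {e : Sym2 V // e ∈ G.edgeSet} | M r ≠ none} = Set.univ := by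
        by_contra hne
        have hss : {r : V ⊕ {e : Sym2 V // e ∈ G.edgeSet} | M r ≠ none} ⊂ Set.univ := Set.ssubset_univ_iff.2 hne
        have hlt := Set.ncard_lt_ncard hss Set.finite_univ
        rw [Set.ncard_univ, Nat.card_eq_fintype_card, Fintype.card_sum, hcardT] at hlt
        rw [HRLQ.msize] at hMs
        omega
      intro r
      have : r ∈ {r : V ⊕ {e : Sym2 V // e ∈ G.edgeSet} | M r ≠ none} := huniv ▸ Set.mem_univ r
      exact Option.ne_none_iff_exists'.1 this
    haveI : DecidablePred (fun v : V => M (Sum.inl v) = some (Sum.inr ())) :=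
      Classical.decPred _
    set S : Finset V :=
      Finset.univ.filter (fun v => M (Sum.inl v) = some (Sum.inr ())) with hS
    have hSmem : ∀ v : V, v ∈ S ↔ M (Sum.inl v) = some (Sum.inr ()) := by
      intro v; simp [hS]
    have hmx : HRLQ.matchedTo M (Sum.inr ()) = Sum.inl '' ↑S := by
      ext r
      cases r with
      | inl v => simp [HRLQ.matchedTo, hSmem]
      | inr e =>
        simp only [HRLQ.matchedTo, Set.mem_setOf_eq, Set.mem_image]
        constructor
        · intro hcontra
          exact absurd (hME _ _ hcontra) (hE4 e)
        · rintro ⟨a, _, h⟩; exact absurd h (by simp)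
    have hScard : S.card = k := by
      have h1 := hMf (Sum.inr ())
      have h2 := hMq (Sum.inr ())
      rw [hxl, hmx, Set.ncard_image_of_injective _ Sum.inl_injective,
        Set.ncard_coe_finset] at h1
      rw [hxu, hmx, Set.ncard_image_of_injective _ Sum.inl_injective,
        Set.ncard_coe_finset] at h2
      omega
    refine ⟨S, hScard, ?_⟩
    intro u hu w hw hadj
    set e : {e : Sym2 V // e ∈ G.edgeSet} := ⟨s(u,w), G.mem_edgeSet.mpr hadj⟩ with he
    obtain ⟨h, hMe⟩ := hall (Sum.inr e)
    -- the endpoint a that e is matched to satisfies a ∈ S, giving envy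
    have henvy : ∀ a : V, a ∈ S → h = Sum.inl a → a ∈ e.1 → False := by
      intro a haS hha hae
      refine hMef (Sum.inl a) (Sum.inr e)
        ⟨Sum.inl a, hha ▸ hMe, ⟨(hE1 a a).2 rfl, ?_⟩, hh a e hae⟩
      intro h' hh'
      rw [(hSmem a).1 haS] at hh'
      rw [Option.some_inj] at hh'
      subst hh'
      exact hr a
    cases h with
    | inl a =>
      have hae : a ∈ e.1 := (hE3 e a).1 (hME _ _ hMe)
      have : a = u ∨ a = w := Sym2.mem_iff.1 hae
      rcases this with rfl | rfl
      · exact henvy a hu rfl hae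
      · exact henvy a hw rfl hae
    | inr u' =>
      cases u'
      exact hE4 e (hME _ _ hMe)
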